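/- The commutative algebra over ℚ(q) generated by elements U, K, H subject to the relations U² = ([10][6][2]/([5][3]))U, UH = [7]U, UK = 0, H² = [3] + ([4]/[2])H + [4]U + [4]K, HK = −[5]K, K² = ([2]²[6]/[3])K is a free module of rank 4 with basis {1, U, K, H}. -/

import Mathlib

/-- The variable `q`, the generator of the field of rational functions `ℚ(q)`. -/
noncomputable def q : RatFunc ℚ := RatFunc.X

/-- The quantum integer `[n] = (q^n - q^{-n})/(q - q⁻¹)` in `ℚ(q)`. -/
noncomputable def qi (n : ℤ) : RatFunc ℚ := (q ^ n - q ^ (-n)) / (q - q⁻¹)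

open MvPolynomial in
/-- The ideal of relations defining the commutative algebra `A(2)`; the variables
`X 0`, `X 1`, `X 2` stand for `U`, `K`, `H`. -/
noncomputable def A2rel : Ideal (MvPolynomial (Fin 3) (RatFunc ℚ)) :=
  Ideal.span
    { X 0 * X 0 - C (qi 10 * qi 6 * qi 2 / (qi 5 * qi 3)) * X 0,
      X 0 * X 2 - C (qi 7) * X 0,
      X 0 * X 1,
      X 2 * X 2 - (C (qi 3) + C (qi 4 / qi 2) * X 2 + C (qi 4) * X 0 + C (qi 4) * X 1),
      X 2 * X 1 + C (qi 5) * X 1,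
      X 1 * X 1 - C (qi 2 ^ 2 * qi 6 / qi 3) * X 1 }


-- ===== Auxiliary development =====

lemma hq : q ≠ 0 := RatFunc.X_ne_zero

lemma qpow_ne_one (n : ℕ) (hn : 0 < n) : q ^ n ≠ 1 := by
  intro h
  rw [q, ← RatFunc.algebraMap_X (K := ℚ), ← map_pow,
    ← map_one (algebraMap (Polynomial ℚ) (RatFunc ℚ))] at h
  have h2 := RatFunc.algebraMap_injective (K := ℚ) h
  have h3 := congrArg (fun p => Polynomial.coeff p 0) h2
  simp [Polynomial.coeff_X_pow] at h3
  exact hn.ne' h3.symm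

lemma num_ne (n : ℕ) (hn : 0 < n) : q ^ n - (q ^ n)⁻¹ ≠ 0 := by
  intro h
  have h1 : q ^ n = (q ^ n)⁻¹ := sub_eq_zero.mp h
  have h2 : q ^ n * q ^ n = 1 := by
    nth_rewrite 2 [h1]; exact mul_inv_cancel₀ (pow_ne_zero n hq)
  rw [← pow_add] at h2
  exact qpow_ne_one (n + n) (by omega) h2

lemma den_ne : q - q⁻¹ ≠ 0 := by
  have := num_ne 1 one_pos
  simpa using this

lemma qi_ne (n : ℕ) (hn : 0 < n) : qi n ≠ 0 := by
  rw [qi, zpow_neg, zpow_natCast]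
  exact div_ne_zero (num_ne n hn) den_ne

lemma q2_ne : q ^ 2 - 1 ≠ 0 := sub_ne_zero.mpr (qpow_ne_one 2 (by norm_num))

lemma qival (n : ℕ) (hn : 0 < n) :
    qi n = (q ^ (2 * n) - 1) / (q ^ (n - 1) * (q ^ 2 - 1)) := by
  obtain ⟨m, rfl⟩ : ∃ m, n = m + 1 := ⟨n - 1, by omega⟩
  rw [qi, zpow_neg, zpow_natCast,
    div_eq_div_iff den_ne (mul_ne_zero (pow_ne_zero _ hq) q2_ne)]
  simp only [Nat.add_sub_cancel]
  have key : (q ^ (m + 1))⁻¹ * q ^ m = q⁻¹ := by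
    rw [pow_succ, mul_inv, mul_comm, ← mul_assoc, mul_inv_cancel₀ (pow_ne_zero _ hq), one_mul]
  rw [sub_mul, show (q ^ (m + 1))⁻¹ * (q ^ m * (q ^ 2 - 1)) = q⁻¹ * (q ^ 2 - 1) by
    rw [← mul_assoc, key]]
  linear_combination (q ^ (2 * m + 1) - q) * (mul_inv_cancel₀ hq)

lemma qiL (n : ℕ) (hn : 0 < n) (P : RatFunc ℚ) (hP : P * (q ^ 2 - 1) = q ^ (2*n) - 1) :
    qi n = P / q ^ (n - 1) := by
  rw [qival n hn, div_eq_div_iff (mul_ne_zero (pow_ne_zero _ hq) q2_ne) (pow_ne_zero _ hq),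
    ← hP]
  ring

lemma qi2L : qi 2 = (q ^ 2 + 1) / q ^ 1 := qiL 2 (by norm_num) _ (by ring)
lemma qi3L : qi 3 = (q ^ 4 + q ^ 2 + 1) / q ^ 2 := qiL 3 (by norm_num) _ (by ring)
lemma qi4L : qi 4 = (q ^ 6 + q ^ 4 + q ^ 2 + 1) / q ^ 3 := qiL 4 (by norm_num) _ (by ring)
lemma qi5L : qi 5 = (q ^ 8 + q ^ 6 + q ^ 4 + q ^ 2 + 1) / q ^ 4 := qiL 5 (by norm_num) _ (by ring)
lemma qi6L : qi 6 = (q ^ 10 + q ^ 8 + q ^ 6 + q ^ 4 + q ^ 2 + 1) / q ^ 5 :=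
  qiL 6 (by norm_num) _ (by ring)
lemma qi7L : qi 7 = (q ^ 12 + q ^ 10 + q ^ 8 + q ^ 6 + q ^ 4 + q ^ 2 + 1) / q ^ 6 :=
  qiL 7 (by norm_num) _ (by ring)
lemma qi10L : qi 10 =
    (q ^ 18 + q ^ 16 + q ^ 14 + q ^ 12 + q ^ 10 + q ^ 8 + q ^ 6 + q ^ 4 + q ^ 2 + 1) / q ^ 9 :=
  qiL 10 (by norm_num) _ (by ring)

lemma l42 : qi 4 / qi 2 = (q ^ 4 + 1) / q ^ 2 := by
  rw [div_eq_iff (show qi 2 ≠ 0 from qi_ne 2 (by norm_num)), qi4L, qi2L]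
  field_simp [hq]
  ring

lemma lc1 : qi 10 * qi 6 * qi 2 / (qi 5 * qi 3) =
    (q ^ 10 + 1) * (q ^ 6 + 1) * (q ^ 2 + 1) / q ^ 9 := by
  rw [div_eq_iff (show qi 5 * qi 3 ≠ 0 from
      mul_ne_zero (qi_ne 5 (by norm_num)) (qi_ne 3 (by norm_num))),
    qi10L, qi6L, qi2L, qi5L, qi3L]
  field_simp [hq]
  ring

lemma lc2 : qi 2 ^ 2 * qi 6 / qi 3 = (q ^ 2 + 1) ^ 2 * (q ^ 6 + 1) / q ^ 5 := by
  rw [div_eq_iff (show qi 3 ≠ 0 from qi_ne 3 (by norm_num)), qi2L, qi6L, qi3L]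
  field_simp [hq]
  ring

lemma idA : qi 7 * qi 7 =
    qi 3 + qi 4 / qi 2 * qi 7 + qi 4 * (qi 10 * qi 6 * qi 2 / (qi 5 * qi 3)) := by
  rw [l42, lc1, qi7L, qi3L, qi4L]
  field_simp [hq]
  ring

lemma idB : (-qi 5) * (-qi 5) =
    qi 3 + qi 4 / qi 2 * (-qi 5) + qi 4 * (qi 2 ^ 2 * qi 6 / qi 3) := by
  rw [l42, lc2, qi5L, qi3L, qi4L]
  field_simp [hq]
  ring

lemma idC : qi 3 * qi 3 = qi 3 + qi 4 / qi 2 * qi 3 := by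
  rw [l42, qi3L]
  field_simp [hq]
  ring

lemma idD : (-1 : RatFunc ℚ) * (-1) = qi 3 + qi 4 / qi 2 * (-1) := by
  rw [l42, qi3L]
  field_simp [hq]
  ring

lemma h31 : qi 3 + 1 ≠ 0 := by
  intro h
  have h1 : qi 3 = -1 := by linear_combination h
  rw [qi3L] at h1
  have h2 : q ^ 4 + q ^ 2 + 1 = -1 * q ^ 2 := (div_eq_iff (pow_ne_zero 2 hq)).mp h1
  have h3 : (q ^ 2 + 1) ^ 2 = 0 := by linear_combination h2
  have h4 : q ^ 2 + 1 = 0 := by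
    exact pow_eq_zero_iff (n := 2) (by norm_num) |>.mp h3
  have h5 : q ^ 4 = 1 := by linear_combination (q ^ 2 - 1) * h4
  exact qpow_ne_one 4 (by norm_num) h5

section main
open MvPolynomial

local notation "F" => RatFunc ℚ

/-- model vectors for U, K, H -/
noncomputable def fv : Fin 3 → (Fin 4 → RatFunc ℚ) :=
  ![![qi 10 * qi 6 * qi 2 / (qi 5 * qi 3), 0, 0, 0],
    ![0, qi 2 ^ 2 * qi 6 / qi 3, 0, 0],
    ![qi 7, -qi 5, qi 3, -1]]

noncomputable def phi : MvPolynomial (Fin 3) F →ₐ[F] (Fin 4 → F) :=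
  MvPolynomial.aeval fv

lemma phi_ker : A2rel ≤ RingHom.ker phi := by
  rw [A2rel, Ideal.span_le]
  intro p hp
  simp only [Set.mem_insert_iff, Set.mem_singleton_iff] at hp
  rw [SetLike.mem_coe, RingHom.mem_ker]
  rcases hp with rfl | rfl | rfl | rfl | rfl | rfl <;>
    [skip; skip; skip;
     (funext j; fin_cases j <;>
        simp [phi, fv, Pi.algebraMap_apply, Algebra.algebraMap_self] <;>
        [linear_combination idA; linear_combination idB;
         linear_combination idC; linear_combination idD]);
     skip; skip] <;>
  · funext j
    fin_cases j <;>
      simp [phi, fv, Pi.algebraMap_apply, Algebra.algebraMap_self] <;> ring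

local notation "Q" => MvPolynomial (Fin 3) (RatFunc ℚ) ⧸ A2rel
local notation "mk" => Ideal.Quotient.mk A2rel

lemma mk_rel (p : MvPolynomial (Fin 3) (RatFunc ℚ))
    (hp : p ∈ ({ X 0 * X 0 - C (qi 10 * qi 6 * qi 2 / (qi 5 * qi 3)) * X 0,
      X 0 * X 2 - C (qi 7) * X 0,
      X 0 * X 1,
      X 2 * X 2 - (C (qi 3) + C (qi 4 / qi 2) * X 2 + C (qi 4) * X 0 + C (qi 4) * X 1),
      X 2 * X 1 + C (qi 5) * X 1,
      X 1 * X 1 - C (qi 2 ^ 2 * qi 6 / qi 3) * X 1 } :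
        Set (MvPolynomial (Fin 3) (RatFunc ℚ)))) : mk p = 0 :=
  Ideal.Quotient.eq_zero_iff_mem.mpr (Ideal.subset_span hp)

lemma mk_C (a : RatFunc ℚ) : mk (C a) = a • 1 := by
  rw [Algebra.smul_def (A := MvPolynomial (Fin 3) (RatFunc ℚ) ⧸ A2rel), mul_one]
  rfl

lemma rel1 : mk (X 0) * mk (X 0) = (qi 10 * qi 6 * qi 2 / (qi 5 * qi 3)) • mk (X 0) := by
  have h := mk_rel _ (by left; rfl)
  rw [map_sub, map_mul, map_mul, sub_eq_zero] at h
  rw [h, mk_C, smul_mul_assoc, one_mul]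

lemma rel2 : mk (X 0) * mk (X 2) = qi 7 • mk (X 0) := by
  have h := mk_rel _ (by right; left; rfl)
  rw [map_sub, map_mul, map_mul, sub_eq_zero] at h
  rw [h, mk_C, smul_mul_assoc, one_mul]

lemma rel3 : mk (X 0) * mk (X 1) = 0 := by
  have h := mk_rel _ (by right; right; left; rfl)
  rw [map_mul] at h
  exact h

lemma rel4 : mk (X 2) * mk (X 2) =
    qi 3 • 1 + (qi 4 / qi 2) • mk (X 2) + qi 4 • mk (X 0) + qi 4 • mk (X 1) := by
  have h := mk_rel _ (by right; right; right; left; rfl)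
  rw [map_sub, map_mul, sub_eq_zero] at h
  rw [h]
  simp only [map_add, map_mul, mk_C, smul_mul_assoc, one_mul]

lemma rel5 : mk (X 2) * mk (X 1) = -(qi 5 • mk (X 1)) := by
  have h := mk_rel _ (by right; right; right; right; left; rfl)
  rw [map_add, map_mul, map_mul, add_eq_zero_iff_eq_neg] at h
  rw [h, mk_C, smul_mul_assoc, one_mul]

lemma rel6 : mk (X 1) * mk (X 1) = (qi 2 ^ 2 * qi 6 / qi 3) • mk (X 1) := by
  have h := mk_rel _ (by right; right; right; right; right; rfl)
  rw [map_sub, map_mul, map_mul, sub_eq_zero] at h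
  rw [h, mk_C, smul_mul_assoc, one_mul]

noncomputable def vv : Fin 4 → Q := ![1, mk (X 0), mk (X 1), mk (X 2)]

lemma span_vv : ⊤ ≤ Submodule.span (RatFunc ℚ) (Set.range vv) := by
  intro x _
  obtain ⟨p, rfl⟩ := Ideal.Quotient.mk_surjective x
  set S := Submodule.span (RatFunc ℚ) (Set.range vv) with hS
  have h1 : (1 : Q) ∈ S := Submodule.subset_span ⟨0, rfl⟩
  have hx0 : mk (X 0) ∈ S := Submodule.subset_span ⟨1, rfl⟩
  have hx1 : mk (X 1) ∈ S := Submodule.subset_span ⟨2, rfl⟩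
  have hx2 : mk (X 2) ∈ S := Submodule.subset_span ⟨3, rfl⟩
  have key : ∀ i : Fin 3, ∀ s ∈ S, s * mk (X i) ∈ S := by
    intro i s hs
    induction hs using Submodule.span_induction with
    | mem y hy =>
      obtain ⟨j, rfl⟩ := hy
      fin_cases j <;> fin_cases i <;>
        simp only [vv, Fin.reduceFinMk, Fin.isValue, Matrix.cons_val_zero, Matrix.cons_val_one, Matrix.head_cons,
          Matrix.cons_val_two, Matrix.tail_cons, Matrix.cons_val_three, one_mul,
          Fin.mk_zero, Fin.mk_one] <;>
        first
          | exact hx0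
          | exact hx1
          | exact hx2
          | (rw [rel1]; exact S.smul_mem _ hx0)
          | (rw [rel3]; exact S.zero_mem)
          | (rw [rel2]; exact S.smul_mem _ hx0)
          | (rw [mul_comm, rel3]; exact S.zero_mem)
          | (rw [rel6]; exact S.smul_mem _ hx1)
          | (rw [mul_comm, rel5]; exact S.neg_mem (S.smul_mem _ hx1))
          | (rw [mul_comm, rel2]; exact S.smul_mem _ hx0)
          | (rw [rel5]; exact S.neg_mem (S.smul_mem _ hx1))
          | (rw [rel4]
             exact S.add_mem (S.add_mem (S.add_mem (S.smul_mem _ h1) (S.smul_mem _ hx2))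
               (S.smul_mem _ hx0)) (S.smul_mem _ hx1))
    | zero => rw [zero_mul]; exact S.zero_mem
    | add a b _ _ ha hb => rw [add_mul]; exact S.add_mem ha hb
    | smul c a _ ha => rw [smul_mul_assoc]; exact S.smul_mem _ ha
  induction p using MvPolynomial.induction_on with
  | C a => rw [show ((mk (C a) : Q)) = a • 1 from mk_C a]; exact S.smul_mem _ h1
  | add p r hp hr => rw [map_add]; exact S.add_mem (hp trivial) (hr trivial)
  | mul_X p i hp => rw [map_mul]; exact key i _ (hp trivial)


noncomputable def psi : (MvPolynomial (Fin 3) (RatFunc ℚ) ⧸ A2rel) →ₐ[RatFunc ℚ] (Fin 4 → RatFunc ℚ) :=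
  Ideal.Quotient.liftₐ A2rel phi (fun a ha => phi_ker ha)

lemma psi_mk (p : MvPolynomial (Fin 3) (RatFunc ℚ)) : psi (mk p) = phi p := by
  simp [psi, Ideal.Quotient.liftₐ_apply, Ideal.Quotient.lift_mk]; rfl

lemma indep : LinearIndependent (RatFunc ℚ) vv := by
  apply LinearIndependent.of_comp (psi.toLinearMap)
  have hcomp : (⇑psi.toLinearMap ∘ vv) = ![1, fv 0, fv 1, fv 2] := by
    funext j
    fin_cases j <;>
      simp [vv, psi_mk, phi, map_one] <;> rfl
  rw [hcomp, Fintype.linearIndependent_iff]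
  intro g hg
  have e0 := congrFun hg 0
  have e1 := congrFun hg 1
  have e2 := congrFun hg 2
  have e3 := congrFun hg 3
  simp [Fin.sum_univ_four, fv] at e0 e1 e2 e3
  have hg3 : g 3 = 0 := by
    have h := sub_eq_zero.mpr (e2.trans e3.symm)
    have : g 3 * (qi 3 + 1) = 0 := by linear_combination h
    rcases mul_eq_zero.mp this with h' | h'
    · exact h'
    · exact absurd h' h31
  have hg0 : g 0 = 0 := by rw [hg3] at e3; simpa using e3
  have hg1 : g 1 = 0 := by
    rw [hg0, hg3] at e0
    simp at e0
    rcases e0 with h' | h'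
    · exact h'
    · exfalso
      rcases h' with ((h | h) | h) | h | h
      exacts [qi_ne 10 (by norm_num) h, qi_ne 6 (by norm_num) h, qi_ne 2 (by norm_num) h,
        qi_ne 5 (by norm_num) h, qi_ne 3 (by norm_num) h]
  have hg2 : g 2 = 0 := by
    rw [hg0, hg3] at e1
    simp at e1
    rcases e1 with h' | h'
    · exact h'
    · exfalso
      rcases h' with (h | h) | h
      exacts [qi_ne 2 (by norm_num) h, qi_ne 6 (by norm_num) h, qi_ne 3 (by norm_num) h]
  intro i
  fin_cases i <;> assumption

noncomputable def bA2 : Module.Basis (Fin 4) (RatFunc ℚ) (MvPolynomial (Fin 3) (RatFunc ℚ) ⧸ A2rel) :=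
  Module.Basis.mk indep span_vv

/-- `A(2)` is a free `ℚ(q)`-module of rank `4` with basis `{1, U, K, H}`. -/
theorem A2_free_rank_four :
    ∃ b : Module.Basis (Fin 4) (RatFunc ℚ) (MvPolynomial (Fin 3) (RatFunc ℚ) ⧸ A2rel),
      b 0 = 1 ∧
      b 1 = Ideal.Quotient.mk A2rel (MvPolynomial.X 0) ∧
      b 2 = Ideal.Quotient.mk A2rel (MvPolynomial.X 1) ∧
      b 3 = Ideal.Quotient.mk A2rel (MvPolynomial.X 2) := by
  exact ⟨bA2, by simp [bA2, Module.Basis.mk_apply, vv], by simp [bA2, Module.Basis.mk_apply, vv],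
    by simp [bA2, Module.Basis.mk_apply, vv], by simp [bA2, Module.Basis.mk_apply, vv]⟩
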